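/- Let θ be a partial action of a group G on a semigroup S whose domains D_x are ideals. If for every x ≠ 1 the ideal D_x is an idempotent semigroup ideal (D_x · D_x = D_x) or is weakly reductive, then the globalization condition θ(x, θ(x⁻¹, su)t) = s·θ(x, θ(x⁻¹,u)t) holds for all x ∈ G, u ∈ D_x, s,t ∈ S, and hence (θ,S) is globalizable in the category of global actions on semigroups. In particular this holds if S is an inverse semigroup or if each D_x is unital. -/

import Mathlib

universe u

def IsPartialAction {G A : Type u} [Group G] (θ : G → A → Option A) : Prop :=
  (∀ a, θ 1 a = some a) ∧
  (∀ x a b, θ x a = some b → θ x⁻¹ b = some a) ∧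
  (∀ x y a b c, θ y a = some b → θ x b = some c → θ (x * y) a = some c)

/-- The relation `(x,a) ∼ (y,b) ↔ θ(y⁻¹x, a) = b` on `G × A`. -/
def glueRel {G A : Type u} [Group G] (θ : G → A → Option A) : G × A → G × A → Prop :=
  fun p q => θ (q.1⁻¹ * p.1) p.2 = some q.2

/-- The domain `D_x = ran θₓ = dom θ_{x⁻¹}` of a partial action. -/
def paDom {G S : Type u} [Group G] (θ : G → S → Option S) (x : G) : Set S :=
  {s | (θ x⁻¹ s).isSome}

/-- A partial action of `G` on the semigroup `S` whose domains `D_x` are two-sided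
ideals and whose partial bijections `θₓ : D_{x⁻¹} → D_x` are semigroup isomorphisms. -/
def IsIdealPartialAction {G S : Type u} [Group G] [Semigroup S]
    (θ : G → S → Option S) : Prop :=
  IsPartialAction θ ∧
  (∀ (x : G) (s t : S), s ∈ paDom θ x → s * t ∈ paDom θ x ∧ t * s ∈ paDom θ x) ∧
  (∀ (x : G) (a b u v : S),
    θ x a = some u → θ x b = some v → θ x (a * b) = some (u * v))

/-- `(θ, S)` admits a globalization in the category of global actions of `G` on
semigroups: a semigroup `T` with a global action of `G` by automorphisms and an
injective homomorphism `ι : S → T` such that `θ(x,a)` is defined iff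
`x·ι(a) ∈ ι(S)`. -/
def HasSemigroupGlobalization {G S : Type u} [Group G] [Semigroup S]
    (θ : G → S → Option S) : Prop :=
  ∃ (T : Type u) (mul : T → T → T) (act : G → T → T) (ι : S → T),
    (∀ a b c, mul (mul a b) c = mul a (mul b c)) ∧
    (∀ t, act 1 t = t) ∧
    (∀ x y t, act x (act y t) = act (x * y) t) ∧
    (∀ (x : G) (a b : T), act x (mul a b) = mul (act x a) (act x b)) ∧
    Function.Injective ι ∧
    (∀ a b : S, ι (a * b) = mul (ι a) (ι b)) ∧
    (∀ x a b, θ x a = some b → act x (ι a) = ι b) ∧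
    (∀ (x : G) (a : S), (θ x a).isSome ↔ act x (ι a) ∈ Set.range ι)

/-- The condition `x(x⁻¹(su)t) = s·x(x⁻¹(u)t)` for all `x ∈ G`, `u ∈ D_x`, `s,t ∈ S`
(all expressions being defined since the domains are ideals). -/
def SemGlobCond {G S : Type u} [Group G] [Semigroup S]
    (θ : G → S → Option S) : Prop :=
  ∀ (x : G) (u s t a b c d : S),
    θ x⁻¹ (s * u) = some a → θ x (a * t) = some b →
    θ x⁻¹ u = some c → θ x (c * t) = some d → b = s * d

set_option linter.unusedSectionVars false
set_option linter.unusedVariables false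

namespace Stmt18Aux

variable {G S : Type u} [Group G] [Semigroup S] {θ : G → S → Option S}

lemma one_act (h : IsIdealPartialAction θ) (a : S) : θ 1 a = some a := h.1.1 a

lemma inv_act (h : IsIdealPartialAction θ) {x : G} {a b : S} (hab : θ x a = some b) :
    θ x⁻¹ b = some a := h.1.2.1 x a b hab

lemma comp_act (h : IsIdealPartialAction θ) {x y : G} {a b c : S}
    (h1 : θ y a = some b) (h2 : θ x b = some c) : θ (x * y) a = some c :=
  h.1.2.2 x y a b c h1 h2

/-- Full compatibility: if `θ h' a = b` then `θ (g h') a = θ g b` as options. -/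
lemma compat (h : IsIdealPartialAction θ) {g g' : G} {a b : S} (hb : θ g' a = some b) :
    θ (g * g') a = θ g b := by
  cases hc : θ g b with
  | some c => exact comp_act h hb hc
  | none =>
    cases hd : θ (g * g') a with
    | none => rfl
    | some d =>
      have h2 := comp_act h (inv_act h hb) hd
      rw [mul_inv_cancel_right] at h2
      rw [hc] at h2
      cases h2

lemma mul_act (h : IsIdealPartialAction θ) {g : G} {a b p q : S}
    (ha : θ g a = some p) (hb : θ g b = some q) : θ g (a * b) = some (p * q) :=
  h.2.2 g a b p q ha hb

lemma dom_mul_left (h : IsIdealPartialAction θ) {g : G} {a : S} (t : S)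
    (ha : (θ g a).isSome) : (θ g (a * t)).isSome := by
  have := (h.2.1 g⁻¹ a t (by simpa [paDom] using ha)).1
  simpa [paDom] using this

lemma dom_mul_right (h : IsIdealPartialAction θ) {g : G} {a : S} (t : S)
    (ha : (θ g a).isSome) : (θ g (t * a)).isSome := by
  have := (h.2.1 g⁻¹ a t (by simpa [paDom] using ha)).2
  simpa [paDom] using this

end Stmt18Aux

namespace Stmt18Aux

variable {G S : Type u} [Group G] [Semigroup S] {θ : G → S → Option S}

lemma isSome_of_eq_some {α : Type u} {o : Option α} {a : α} (h : o = some a) : o.isSome := by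
  rw [h]; rfl

theorem semGlobCond (h : IsIdealPartialAction θ)
    (hdom : ∀ x : G, x ≠ 1 →
      (∀ u ∈ paDom θ x, ∃ v ∈ paDom θ x, ∃ w ∈ paDom θ x, u = v * w) ∨
      (∀ a ∈ paDom θ x, ∀ b ∈ paDom θ x,
        (∀ d ∈ paDom θ x, d * a = d * b ∧ a * d = b * d) → a = b)) :
    SemGlobCond θ := by
  intro x u s t a b c d ha hb hc hd
  by_cases hx : x = 1
  · subst hx
    rw [inv_one, one_act h] at ha hc
    rw [one_act h] at hb hd
    injection ha with ha'; subst ha'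
    injection hb with hb'; subst hb'
    injection hc with hc'; subst hc'
    injection hd with hd'; subst hd'
    rw [mul_assoc]
  · rcases hdom x hx with hidem | hwr
    · -- idempotent case
      obtain ⟨v, hv, w, hw, rfl⟩ := hidem u (by simpa [paDom] using isSome_of_eq_some hc)
      simp only [paDom, Set.mem_setOf_eq] at hv hw
      obtain ⟨v₁, hv₁⟩ := Option.isSome_iff_exists.mp hv
      obtain ⟨w₁, hw₁⟩ := Option.isSome_iff_exists.mp hw
      obtain ⟨p, hp⟩ := Option.isSome_iff_exists.mp (dom_mul_right h s hv)
      -- a = p * w₁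
      have ha' : θ x⁻¹ (s * (v * w)) = some (p * w₁) := by
        rw [show s * (v * w) = (s * v) * w from (mul_assoc _ _ _).symm]
        exact mul_act h hp hw₁
      rw [ha] at ha'
      obtain rfl : a = p * w₁ := by injection ha'
      -- e := θ x (w₁ * t)
      have hxw : θ x w₁ = some w := by simpa using inv_act h hw₁
      obtain ⟨e, he⟩ := Option.isSome_iff_exists.mp (dom_mul_left h t (isSome_of_eq_some hxw))
      have hxp : θ x p = some (s * v) := by simpa using inv_act h hp
      have hb' : θ x ((p * w₁) * t) = some ((s * v) * e) := by
        rw [mul_assoc]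
        exact mul_act h hxp he
      rw [hb] at hb'
      obtain rfl : b = (s * v) * e := by injection hb'
      -- c = v₁ * w₁
      have hc' : θ x⁻¹ (v * w) = some (v₁ * w₁) := mul_act h hv₁ hw₁
      rw [hc] at hc'
      obtain rfl : c = v₁ * w₁ := by injection hc'
      have hxv : θ x v₁ = some v := by simpa using inv_act h hv₁
      have hd' : θ x ((v₁ * w₁) * t) = some (v * e) := by
        rw [mul_assoc]
        exact mul_act h hxv he
      rw [hd] at hd'
      obtain rfl : d = v * e := by injection hd'
      rw [mul_assoc]
    · -- weakly reductive case
      have hbd : (θ x⁻¹ b).isSome := isSome_of_eq_some (inv_act h hb)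
      have hdd : (θ x⁻¹ d).isSome := isSome_of_eq_some (inv_act h hd)
      have hsd : (θ x⁻¹ (s * d)).isSome := dom_mul_right h s hdd
      refine hwr b hbd (s * d) hsd fun e he => ?_
      simp only [paDom, Set.mem_setOf_eq] at he
      obtain ⟨e₁, he₁⟩ := Option.isSome_iff_exists.mp he
      have hxe : θ x e₁ = some e := by simpa using inv_act h he₁
      constructor
      · -- e * b = e * (s * d)
        obtain ⟨f, hf⟩ := Option.isSome_iff_exists.mp (dom_mul_left h s he)
        have h1 : θ x⁻¹ (e * (s * u)) = some (e₁ * a) := mul_act h he₁ ha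
        have h2 : θ x⁻¹ ((e * s) * u) = some (f * c) := mul_act h hf hc
        rw [mul_assoc] at h2
        rw [h1] at h2
        have h3 : e₁ * a = f * c := by injection h2
        have h4 : θ x (e₁ * (a * t)) = some (e * b) := mul_act h hxe hb
        have hxf : θ x f = some (e * s) := by simpa using inv_act h hf
        have h5 : θ x (f * (c * t)) = some ((e * s) * d) := mul_act h hxf hd
        rw [← mul_assoc, h3, mul_assoc] at h4
        rw [h4] at h5
        have h6 : e * b = (e * s) * d := by injection h5
        rw [h6, mul_assoc]
      · -- b * e = (s * d) * e
        obtain ⟨k, hk⟩ := Option.isSome_iff_exists.mp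
          (dom_mul_right h t (isSome_of_eq_some hxe))
        have hxa : θ x a = some (s * u) := by simpa using inv_act h ha
        have hxc : θ x c = some u := by simpa using inv_act h hc
        have h1 : θ x ((a * t) * e₁) = some (b * e) := mul_act h hb hxe
        have h2 : θ x (a * (t * e₁)) = some ((s * u) * k) := mul_act h hxa hk
        rw [← mul_assoc] at h2
        rw [h1] at h2
        have h3 : b * e = (s * u) * k := by injection h2
        have h4 : θ x (c * (t * e₁)) = some (u * k) := mul_act h hxc hk
        have h5 : θ x ((c * t) * e₁) = some (d * e) := mul_act h hd hxe
        rw [← mul_assoc] at h4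
        rw [h4] at h5
        have h6 : u * k = d * e := by injection h5
        rw [h3, mul_assoc, h6, ← mul_assoc]

end Stmt18Aux

namespace Stmt18Aux

variable {G S : Type u} [Group G] [Semigroup S] {θ : G → S → Option S}

/-- Letter gluing: `(x,a) ~ (y,b)` iff `θ(y⁻¹x, a) = b`. -/
def lglue (θ : G → S → Option S) (A B : G × S) : Prop := θ (B.1⁻¹ * A.1) A.2 = some B.2

/-- Two adjacent letters merge to `C` (at the coordinate `C.1`). -/
def Merge (θ : G → S → Option S) (A B C : G × S) : Prop :=
  ∃ p q, θ (C.1⁻¹ * A.1) A.2 = some p ∧ θ (C.1⁻¹ * B.1) B.2 = some q ∧ C.2 = p * q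

/-- One rewriting step on words: merge two adjacent letters. -/
inductive Step (θ : G → S → Option S) : List (G × S) → List (G × S) → Prop
  | head {A B C : G × S} {t : List (G × S)} :
      Merge θ A B C → Step θ (A :: B :: t) (C :: t)
  | cons {A : G × S} {t t' : List (G × S)} : Step θ t t' → Step θ (A :: t) (A :: t')

/-- Letterwise gluing of words. -/
def Eqv (θ : G → S → Option S) : List (G × S) → List (G × S) → Prop :=
  List.Forall₂ (lglue θ)

def StepStar (θ : G → S → Option S) : List (G × S) → List (G × S) → Prop :=
  Relation.ReflTransGen (Step θ)

/-- Joinability modulo letterwise glue. -/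
def J (θ : G → S → Option S) (u v : List (G × S)) : Prop :=
  ∃ a b, StepStar θ u a ∧ StepStar θ v b ∧ Eqv θ a b

lemma lglue_refl (h : IsIdealPartialAction θ) (A : G × S) : lglue θ A A := by
  simp [lglue, one_act h]

lemma lglue_symm (h : IsIdealPartialAction θ) {A B : G × S} (hab : lglue θ A B) :
    lglue θ B A := by
  have := inv_act h hab
  simpa [lglue, mul_inv_rev] using this

lemma lglue_trans' (h : IsIdealPartialAction θ) {A B C : G × S}
    (hab : lglue θ A B) (hbc : lglue θ B C) : lglue θ A C := by
  have := comp_act h hab hbc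
  unfold lglue
  rw [show C.1⁻¹ * A.1 = (C.1⁻¹ * B.1) * (B.1⁻¹ * A.1) by group]
  exact this

lemma eqv_refl (h : IsIdealPartialAction θ) (u : List (G × S)) : Eqv θ u u := by
  induction u with
  | nil => exact List.Forall₂.nil
  | cons A t ih => exact List.Forall₂.cons (lglue_refl h A) ih

lemma eqv_symm (h : IsIdealPartialAction θ) {u v : List (G × S)} (huv : Eqv θ u v) :
    Eqv θ v u := by
  induction huv with
  | nil => exact List.Forall₂.nil
  | cons hab _ ih => exact List.Forall₂.cons (lglue_symm h hab) ih

lemma eqv_trans (h : IsIdealPartialAction θ) {u v w : List (G × S)}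
    (huv : Eqv θ u v) (hvw : Eqv θ v w) : Eqv θ u w := by
  induction huv generalizing w with
  | nil => cases hvw; exact List.Forall₂.nil
  | cons hab _ ih =>
    cases hvw with
    | cons hbc hvw' => exact List.Forall₂.cons (lglue_trans' h hab hbc) (ih hvw')

/-- Merging at two different coordinates gives glued letters. -/
lemma merge_indep (h : IsIdealPartialAction θ) {A B C C' : G × S}
    (h1 : Merge θ A B C) (h2 : Merge θ A B C') : lglue θ C C' := by
  obtain ⟨p, q, hp, hq, hC⟩ := h1
  obtain ⟨p', q', hp', hq', hC'⟩ := h2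
  have hgp : θ (C'.1⁻¹ * C.1) p = some p' := by
    have := compat h (g := C'.1⁻¹ * C.1) hp
    rw [show (C'.1⁻¹ * C.1) * (C.1⁻¹ * A.1) = C'.1⁻¹ * A.1 by group] at this
    rw [hp'] at this
    exact this.symm
  have hgq : θ (C'.1⁻¹ * C.1) q = some q' := by
    have := compat h (g := C'.1⁻¹ * C.1) hq
    rw [show (C'.1⁻¹ * C.1) * (C.1⁻¹ * B.1) = C'.1⁻¹ * B.1 by group] at this
    rw [hq'] at this
    exact this.symm
  unfold lglue
  rw [hC, hC']
  exact mul_act h hgp hgq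

/-- Merging is invariant under gluing the two factors. -/
lemma merge_glue (h : IsIdealPartialAction θ) {A A' B B' C : G × S}
    (hA : lglue θ A A') (hB : lglue θ B B') (hm : Merge θ A B C) : Merge θ A' B' C := by
  obtain ⟨p, q, hp, hq, hC⟩ := hm
  refine ⟨p, q, ?_, ?_, hC⟩
  · have := compat h (g := C.1⁻¹ * A'.1) hA
    rw [show (C.1⁻¹ * A'.1) * (A'.1⁻¹ * A.1) = C.1⁻¹ * A.1 by group] at this
    rw [hp] at this
    exact this.symm
  · have := compat h (g := C.1⁻¹ * B'.1) hB
    rw [show (C.1⁻¹ * B'.1) * (B'.1⁻¹ * B.1) = C.1⁻¹ * B.1 by group] at this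
    rw [hq] at this
    exact this.symm

end Stmt18Aux

namespace Stmt18Aux

variable {G S : Type u} [Group G] [Semigroup S] {θ : G → S → Option S}

/-- The key overlap diamond, using the globalization condition. -/
lemma merge_overlap (h : IsIdealPartialAction θ) (hsg : SemGlobCond θ) {A B D C E : G × S}
    (h1 : Merge θ A B C) (h2 : Merge θ B D E) :
    ∃ C₂ E₂, Merge θ C D C₂ ∧ Merge θ A E E₂ ∧ lglue θ C₂ E₂ := by
  obtain ⟨p, q, hp, hq, hC⟩ := h1
  obtain ⟨q', r, hq', hr, hE⟩ := h2
  -- θ (E.1⁻¹ C.1) q = some q'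
  have hq'2 : θ (E.1⁻¹ * C.1) q = some q' := by
    have := compat h (g := E.1⁻¹ * C.1) hq
    rw [show (E.1⁻¹ * C.1) * (C.1⁻¹ * B.1) = E.1⁻¹ * B.1 by group, hq'] at this
    exact this.symm
  have hqback : θ (C.1⁻¹ * E.1) q' = some q := by
    have := inv_act h hq'2
    rwa [show (E.1⁻¹ * C.1)⁻¹ = C.1⁻¹ * E.1 by group] at this
  obtain ⟨m, hm⟩ := Option.isSome_iff_exists.mp
    (dom_mul_right h (g := E.1⁻¹ * C.1) p (isSome_of_eq_some hq'2))
  obtain ⟨n, hn⟩ := Option.isSome_iff_exists.mp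
    (dom_mul_left h (g := C.1⁻¹ * E.1) r (isSome_of_eq_some hqback))
  have hmback : θ (C.1⁻¹ * E.1) m = some (p * q) := by
    have := inv_act h hm
    rwa [show (E.1⁻¹ * C.1)⁻¹ = C.1⁻¹ * E.1 by group] at this
  obtain ⟨b₀, hb₀⟩ := Option.isSome_iff_exists.mp
    (dom_mul_left h (g := C.1⁻¹ * E.1) r (isSome_of_eq_some hmback))
  -- apply the globalization condition
  have hkey : b₀ = p * n := by
    refine hsg (C.1⁻¹ * E.1) q p r m b₀ q' n ?_ hb₀ ?_ hn
    · rwa [show (C.1⁻¹ * E.1)⁻¹ = E.1⁻¹ * C.1 by group]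
    · rwa [show (C.1⁻¹ * E.1)⁻¹ = E.1⁻¹ * C.1 by group]
  refine ⟨(E.1, m * r), (C.1, p * n), ⟨m, r, ?_, ?_, rfl⟩, ⟨p, n, ?_, ?_, rfl⟩, ?_⟩
  · rw [hC]; exact hm
  · exact hr
  · exact hp
  · rw [hE]; exact hn
  · show θ (C.1⁻¹ * E.1) (m * r) = some (p * n)
    rw [hb₀, hkey]

/-- No step out of the empty word or a single letter. -/
lemma no_step_nil {v : List (G × S)} (hs : Step θ [] v) : False := by cases hs

lemma no_step_singleton {A : G × S} {v : List (G × S)} (hs : Step θ [A] v) : False := by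
  cases hs with
  | cons hs' => exact no_step_nil hs'

lemma stepStar_singleton {A : G × S} {v : List (G × S)} (hs : StepStar θ [A] v) :
    v = [A] := by
  rcases Relation.ReflTransGen.cases_head hs with heq | ⟨c, hstep, _⟩
  · exact heq.symm
  · exact absurd hstep no_step_singleton

lemma step_length {u v : List (G × S)} (hs : Step θ u v) : v.length + 1 = u.length := by
  induction hs with
  | head _ => simp
  | cons _ ih => simpa using ih

lemma stepStar_length {u v : List (G × S)} (hs : StepStar θ u v) : v.length ≤ u.length := by
  induction hs with
  | refl => exact le_refl _
  | tail _ h2 ih => have := step_length h2; omega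

lemma eqv_length (huv : Eqv θ u v) : u.length = v.length := List.Forall₂.length_eq huv

lemma stepStar_cons {A : G × S} {t t' : List (G × S)} (hs : StepStar θ t t') :
    StepStar θ (A :: t) (A :: t') := by
  induction hs with
  | refl => exact Relation.ReflTransGen.refl
  | tail _ h2 ih => exact Relation.ReflTransGen.tail ih (Step.cons h2)

end Stmt18Aux

namespace Stmt18Aux

variable {G S : Type u} [Group G] [Semigroup S] {θ : G → S → Option S}

/-- Coherence: steps can be transported along letterwise glue. -/
lemma coh (h : IsIdealPartialAction θ) {u u' v : List (G × S)}
    (he : Eqv θ u u') (hs : Step θ u v) : ∃ v', Step θ u' v' ∧ Eqv θ v v' := by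
  induction hs generalizing u' with
  | @head A B C t hm =>
    cases he with
    | cons hA he' =>
      rename_i A' u''
      cases he' with
      | cons hB he'' =>
        rename_i B' t'
        exact ⟨C :: t', Step.head (merge_glue h hA hB hm),
          List.Forall₂.cons (lglue_refl h C) he''⟩
  | @cons A t t₁ hst ih =>
    cases he with
    | cons hA he' =>
      rename_i A' t'
      obtain ⟨t₁', hs', he₁⟩ := ih he'
      exact ⟨A' :: t₁', Step.cons hs', List.Forall₂.cons hA he₁⟩

lemma cohStar (h : IsIdealPartialAction θ) {u u' w' : List (G × S)}
    (he : Eqv θ u u') (hs : StepStar θ u' w') : ∃ w, StepStar θ u w ∧ Eqv θ w w' := by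
  induction hs using Relation.ReflTransGen.head_induction_on generalizing u with
  | refl => exact ⟨u, Relation.ReflTransGen.refl, he⟩
  | head hstep _ ih =>
    obtain ⟨m, hsm, hem⟩ := coh h (eqv_symm h he) hstep
    obtain ⟨w, hsw, hew⟩ := ih (eqv_symm h hem)
    exact ⟨w, Relation.ReflTransGen.head hsm hsw, hew⟩

/-- Local confluence modulo glue. -/
lemma local_conf (h : IsIdealPartialAction θ) (hsg : SemGlobCond θ)
    {u v v' : List (G × S)} (h1 : Step θ u v) (h2 : Step θ u v') :
    ∃ a b, StepStar θ v a ∧ StepStar θ v' b ∧ Eqv θ a b := by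
  induction h1 generalizing v' with
  | @head A B C t hm =>
    cases h2 with
    | head hm' =>
      exact ⟨C :: t, _ :: t, Relation.ReflTransGen.refl, Relation.ReflTransGen.refl,
        List.Forall₂.cons (merge_indep h hm hm') (eqv_refl h t)⟩
    | cons h2' =>
      cases h2' with
      | @head B' D E t₂ hm2 =>
        obtain ⟨C₂, E₂, hCD, hAE, hglue⟩ := merge_overlap h hsg hm hm2
        exact ⟨C₂ :: t₂, E₂ :: t₂,
          Relation.ReflTransGen.single (Step.head hCD),
          Relation.ReflTransGen.single (Step.head hAE),
          List.Forall₂.cons hglue (eqv_refl h t₂)⟩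
      | @cons B₂ t₀ t₂ h2'' =>
        exact ⟨C :: t₂, C :: t₂,
          Relation.ReflTransGen.single (Step.cons h2''),
          Relation.ReflTransGen.single (Step.head hm),
          eqv_refl h _⟩
  | @cons A t t₁ hst ih =>
    cases h2 with
    | @head A' B' C' t₃ hm' =>
      -- here u = A :: t with t = B' :: t₃, and v' = C' :: t₃
      cases hst with
      | @head B'' D E t₄ hm2 =>
        obtain ⟨C₂, E₂, hCD, hAE, hglue⟩ := merge_overlap h hsg hm' hm2
        exact ⟨E₂ :: t₄, C₂ :: t₄,
          Relation.ReflTransGen.single (Step.head hAE),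
          Relation.ReflTransGen.single (Step.head hCD),
          List.Forall₂.cons (lglue_symm h hglue) (eqv_refl h t₄)⟩
      | @cons B'' t₄ t₅ hst' =>
        exact ⟨C' :: t₅, C' :: t₅,
          Relation.ReflTransGen.single (Step.head hm'),
          Relation.ReflTransGen.single (Step.cons hst'),
          eqv_refl h _⟩
    | cons h2' =>
      obtain ⟨a, b, hsa, hsb, hab⟩ := ih h2'
      exact ⟨A :: a, A :: b, stepStar_cons hsa, stepStar_cons hsb,
        List.Forall₂.cons (lglue_refl h A) hab⟩

end Stmt18Aux

namespace Stmt18Aux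

variable {G S : Type u} [Group G] [Semigroup S] {θ : G → S → Option S}

/-- Confluence modulo glue, by strong induction on word length. -/
lemma conf (h : IsIdealPartialAction θ) (hsg : SemGlobCond θ) :
    ∀ (n : ℕ) (u a b : List (G × S)), u.length ≤ n → StepStar θ u a → StepStar θ u b →
    ∃ a' b', StepStar θ a a' ∧ StepStar θ b b' ∧ Eqv θ a' b' := by
  intro n
  induction n with
  | zero =>
    intro u a b hlen hua hub
    -- u = [], no steps possible
    interval_cases h' : u.length
    · have hu : u = [] := List.length_eq_zero_iff.mp h'
      subst hu
      have ha : a = [] := by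
        rcases Relation.ReflTransGen.cases_head hua with heq | ⟨c, hstep, _⟩
        · exact heq.symm
        · exact absurd hstep no_step_nil
      have hb : b = [] := by
        rcases Relation.ReflTransGen.cases_head hub with heq | ⟨c, hstep, _⟩
        · exact heq.symm
        · exact absurd hstep no_step_nil
      subst ha; subst hb
      exact ⟨[], [], Relation.ReflTransGen.refl, Relation.ReflTransGen.refl, List.Forall₂.nil⟩
  | succ n ih =>
    intro u a b hlen hua hub
    rcases Relation.ReflTransGen.cases_head hua with heq | ⟨u₁, hs1, hs1'⟩
    · subst heq
      exact ⟨b, b, hub, Relation.ReflTransGen.refl, eqv_refl h b⟩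
    rcases Relation.ReflTransGen.cases_head hub with heq | ⟨u₂, hs2, hs2'⟩
    · subst heq
      exact ⟨a, a, Relation.ReflTransGen.refl, hua, eqv_refl h a⟩
    have hlen1 : u₁.length ≤ n := by have := step_length hs1; omega
    have hlen2 : u₂.length ≤ n := by have := step_length hs2; omega
    obtain ⟨c, c', hc, hc', hcc'⟩ := local_conf h hsg hs1 hs2
    obtain ⟨a₁, c₁, haa₁, hcc₁, hac₁⟩ := ih u₁ a c hlen1 hs1' hc
    obtain ⟨b₁, c₂, hbb₁, hcc₂, hbc₂⟩ := ih u₂ b c' hlen2 hs2' hc'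
    obtain ⟨c₃, hcc₃, hc₃c₂⟩ := cohStar h hcc' hcc₂
    have hlenc : c.length ≤ n := le_trans (stepStar_length hc) hlen1
    obtain ⟨e₁, e₂, he₁, he₂, he⟩ := ih c c₁ c₃ hlenc hcc₁ hcc₃
    obtain ⟨f₁, hf₁, hf₁e₁⟩ := cohStar h hac₁ he₁
    obtain ⟨g₂, hg₂, hg₂e₂⟩ := cohStar h (eqv_symm h hc₃c₂) he₂
    obtain ⟨f₂, hf₂, hf₂g₂⟩ := cohStar h hbc₂ hg₂
    refine ⟨f₁, f₂, Relation.ReflTransGen.trans haa₁ hf₁,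
      Relation.ReflTransGen.trans hbb₁ hf₂, ?_⟩
    exact eqv_trans h hf₁e₁ (eqv_trans h he (eqv_symm h (eqv_trans h hf₂g₂ hg₂e₂)))

lemma J_refl (h : IsIdealPartialAction θ) (u : List (G × S)) : J θ u u :=
  ⟨u, u, Relation.ReflTransGen.refl, Relation.ReflTransGen.refl, eqv_refl h u⟩

lemma J_symm (h : IsIdealPartialAction θ) {u v : List (G × S)} (huv : J θ u v) : J θ v u := by
  obtain ⟨a, b, ha, hb, hab⟩ := huv
  exact ⟨b, a, hb, ha, eqv_symm h hab⟩

lemma J_trans (h : IsIdealPartialAction θ) (hsg : SemGlobCond θ) {u v w : List (G × S)}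
    (h1 : J θ u v) (h2 : J θ v w) : J θ u w := by
  obtain ⟨a, b, ha, hb, hab⟩ := h1
  obtain ⟨c, d, hc, hd, hcd⟩ := h2
  obtain ⟨b', c', hbb', hcc', hbc⟩ := conf h hsg v.length v b c le_rfl hb hc
  obtain ⟨a₂, ha₂, ha₂b'⟩ := cohStar h hab hbb'
  obtain ⟨d₂, hd₂, hd₂c'⟩ := cohStar h (eqv_symm h hcd) hcc'
  exact ⟨a₂, d₂, Relation.ReflTransGen.trans ha ha₂,
    Relation.ReflTransGen.trans hd hd₂,
    eqv_trans h ha₂b' (eqv_trans h hbc (eqv_symm h hd₂c'))⟩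

lemma step_append_right {u v w : List (G × S)} (hs : Step θ u v) :
    Step θ (u ++ w) (v ++ w) := by
  induction hs with
  | head hm => exact Step.head hm
  | cons _ ih => exact Step.cons ih

lemma stepStar_append_right {u v w : List (G × S)} (hs : StepStar θ u v) :
    StepStar θ (u ++ w) (v ++ w) := by
  induction hs with
  | refl => exact Relation.ReflTransGen.refl
  | tail _ h2 ih => exact Relation.ReflTransGen.tail ih (step_append_right h2)

lemma stepStar_append_left {u v w : List (G × S)} (hs : StepStar θ v w) :
    StepStar θ (u ++ v) (u ++ w) := by
  induction u with
  | nil => exact hs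
  | cons A t ih => exact stepStar_cons ih

lemma eqv_append {u v u' v' : List (G × S)} (h1 : Eqv θ u u') (h2 : Eqv θ v v') :
    Eqv θ (u ++ v) (u' ++ v') := by
  induction h1 with
  | nil => exact h2
  | cons hA _ ih => exact List.Forall₂.cons hA ih

lemma J_append (h : IsIdealPartialAction θ) {u v u' v' : List (G × S)}
    (h1 : J θ u u') (h2 : J θ v v') : J θ (u ++ v) (u' ++ v') := by
  obtain ⟨a, b, ha, hb, hab⟩ := h1
  obtain ⟨c, d, hc, hd, hcd⟩ := h2
  exact ⟨a ++ c, b ++ d,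
    Relation.ReflTransGen.trans (stepStar_append_right ha) (stepStar_append_left hc),
    Relation.ReflTransGen.trans (stepStar_append_right hb) (stepStar_append_left hd),
    eqv_append hab hcd⟩

lemma J_singleton (h : IsIdealPartialAction θ) {A B : G × S} (hj : J θ [A] [B]) :
    lglue θ A B := by
  obtain ⟨a, b, ha, hb, hab⟩ := hj
  rw [stepStar_singleton ha] at hab
  rw [stepStar_singleton hb] at hab
  cases hab with
  | cons hAB h' => exact hAB

end Stmt18Aux

namespace Stmt18Aux

variable {G S : Type u} [Group G] [Semigroup S] {θ : G → S → Option S}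

def gmap (z : G) : List (G × S) → List (G × S) := List.map (fun p => (z * p.1, p.2))

lemma lglue_gmap {z : G} {A B : G × S} (hAB : lglue θ A B) :
    lglue θ (z * A.1, A.2) (z * B.1, B.2) := by
  unfold lglue at *
  simpa [mul_assoc, mul_inv_rev] using hAB

lemma merge_gmap {z : G} {A B C : G × S} (hm : Merge θ A B C) :
    Merge θ (z * A.1, A.2) (z * B.1, B.2) (z * C.1, C.2) := by
  obtain ⟨p, q, hp, hq, hC⟩ := hm
  refine ⟨p, q, ?_, ?_, hC⟩
  · simpa [mul_assoc, mul_inv_rev] using hp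
  · simpa [mul_assoc, mul_inv_rev] using hq

lemma step_gmap {z : G} {u v : List (G × S)} (hs : Step θ u v) :
    Step θ (gmap z u) (gmap z v) := by
  induction hs with
  | head hm => exact Step.head (merge_gmap hm)
  | cons _ ih => exact Step.cons ih

lemma stepStar_gmap {z : G} {u v : List (G × S)} (hs : StepStar θ u v) :
    StepStar θ (gmap z u) (gmap z v) := by
  induction hs with
  | refl => exact Relation.ReflTransGen.refl
  | tail _ h2 ih => exact Relation.ReflTransGen.tail ih (step_gmap h2)

lemma eqv_gmap {z : G} {u v : List (G × S)} (he : Eqv θ u v) :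
    Eqv θ (gmap z u) (gmap z v) := by
  induction he with
  | nil => exact List.Forall₂.nil
  | cons hAB _ ih => exact List.Forall₂.cons (lglue_gmap hAB) ih

lemma J_gmap {z : G} {u v : List (G × S)} (hj : J θ u v) : J θ (gmap z u) (gmap z v) := by
  obtain ⟨a, b, ha, hb, hab⟩ := hj
  exact ⟨gmap z a, gmap z b, stepStar_gmap ha, stepStar_gmap hb, eqv_gmap hab⟩

lemma gmap_one (u : List (G × S)) : gmap 1 u = u := by
  simp [gmap]

lemma gmap_gmap (x y : G) (u : List (G × S)) : gmap x (gmap y u) = gmap (x * y) u := by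
  simp [gmap, mul_assoc]

lemma gmap_append (z : G) (u v : List (G × S)) :
    gmap z (u ++ v) = gmap z u ++ gmap z v := List.map_append

end Stmt18Aux

namespace Stmt18Aux

variable {G S : Type u} [Group G] [Semigroup S] {θ : G → S → Option S}

theorem hasGlob (h : IsIdealPartialAction θ) (hsg : SemGlobCond θ) :
    HasSemigroupGlobalization θ := by
  let st : Setoid (List (G × S)) :=
    ⟨J θ, ⟨fun u => J_refl h u, fun hab => J_symm h hab, fun hab hbc => J_trans h hsg hab hbc⟩⟩
  refine ⟨Quotient st,
    Quotient.lift₂ (fun u v => Quotient.mk st (u ++ v))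
      (fun u₁ v₁ u₂ v₂ hu hv => Quotient.sound (J_append h hu hv)),
    fun z => Quotient.lift (fun u => Quotient.mk st (gmap z u))
      (fun u v huv => Quotient.sound (J_gmap huv)),
    fun a => Quotient.mk st [(1, a)], ?_, ?_, ?_, ?_, ?_, ?_, ?_, ?_⟩
  · intro a b c
    induction a using Quotient.ind
    induction b using Quotient.ind
    induction c using Quotient.ind
    rename_i u v w
    show Quotient.mk st ((u ++ v) ++ w) = Quotient.mk st (u ++ (v ++ w))
    rw [List.append_assoc]
  · intro t
    induction t using Quotient.ind
    rename_i u
    show Quotient.mk st (gmap 1 u) = Quotient.mk st u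
    rw [gmap_one]
  · intro x y t
    induction t using Quotient.ind
    rename_i u
    show Quotient.mk st (gmap x (gmap y u)) = Quotient.mk st (gmap (x * y) u)
    rw [gmap_gmap]
  · intro x a b
    induction a using Quotient.ind
    induction b using Quotient.ind
    rename_i u v
    show Quotient.mk st (gmap x (u ++ v)) = Quotient.mk st (gmap x u ++ gmap x v)
    rw [gmap_append]
  · intro a b hab
    have hj : J θ [(1, a)] [(1, b)] := Quotient.exact hab
    have hg := J_singleton h hj
    unfold lglue at hg
    simp only [inv_one, one_mul, one_act h] at hg
    injection hg
  · intro a b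
    show Quotient.mk st [(1, a * b)] = Quotient.mk st ([(1, a)] ++ [(1, b)])
    refine Quotient.sound ?_
    show J θ _ _
    refine J_symm h ⟨[(1, a * b)], [(1, a * b)],
      Relation.ReflTransGen.single (Step.head ⟨a, b, ?_, ?_, rfl⟩),
      Relation.ReflTransGen.refl, eqv_refl h _⟩
    · simpa using one_act h a
    · simpa using one_act h b
  · intro x a b hab
    show Quotient.mk st (gmap x [(1, a)]) = Quotient.mk st [(1, b)]
    refine Quotient.sound ?_
    show J θ (gmap x [(1, a)]) [(1, b)]
    refine ⟨_, _, Relation.ReflTransGen.refl, Relation.ReflTransGen.refl,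
      List.Forall₂.cons ?_ List.Forall₂.nil⟩
    show θ ((1 : G)⁻¹ * (x * 1)) a = some b
    simpa using hab
  · intro x a
    constructor
    · intro hs
      obtain ⟨b, hb⟩ := Option.isSome_iff_exists.mp hs
      refine ⟨b, ?_⟩
      show Quotient.mk st [(1, b)] = Quotient.mk st (gmap x [(1, a)])
      refine (Quotient.sound ?_).symm
      show J θ (gmap x [(1, a)]) [(1, b)]
      refine ⟨_, _, Relation.ReflTransGen.refl, Relation.ReflTransGen.refl,
        List.Forall₂.cons ?_ List.Forall₂.nil⟩
      show θ ((1 : G)⁻¹ * (x * 1)) a = some b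
      simpa using hb
    · rintro ⟨b, hb⟩
      have hj : J θ [(1, b)] (gmap x [(1, a)]) := Quotient.exact hb
      have hj' : J θ [((x * 1 : G), a)] [((1 : G), b)] := J_symm h hj
      have hg := J_singleton h hj'
      unfold lglue at hg
      simp only [inv_one, one_mul, mul_one] at hg
      exact isSome_of_eq_some hg

end Stmt18Aux


/-- if for every `x ≠ 1` the ideal `D_x` is idempotent (`D_x·D_x = D_x`)
or weakly reductive, then the globalization condition holds and `(θ,S)` is
globalizable in the category of global actions on semigroups. -/
theorem stmt_18 {G S : Type u} [Group G] [Semigroup S]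
    (θ : G → S → Option S) (h : IsIdealPartialAction θ)
    (hdom : ∀ x : G, x ≠ 1 →
      (∀ u ∈ paDom θ x, ∃ v ∈ paDom θ x, ∃ w ∈ paDom θ x, u = v * w) ∨
      (∀ a ∈ paDom θ x, ∀ b ∈ paDom θ x,
        (∀ d ∈ paDom θ x, d * a = d * b ∧ a * d = b * d) → a = b)) :
    SemGlobCond θ ∧ HasSemigroupGlobalization θ := by
  have hsg := Stmt18Aux.semGlobCond h hdom
  exact ⟨hsg, Stmt18Aux.hasGlob h hsg⟩
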